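/- A nonnegative square matrix B has total support if and only if there exists a doubly stochastic matrix D with the same zero pattern as B (i.e., D_ij > 0 exactly when B_ij > 0). -/

import Mathlib

open Finset

/-- `B` has total support: `B ≠ 0` and every nonzero entry lies on a positive
diagonal. -/
def HasTotalSupport {n : ℕ} (B : Matrix (Fin n) (Fin n) ℝ) : Prop :=
  B ≠ 0 ∧ ∀ i j, B i j ≠ 0 →
    ∃ σ : Equiv.Perm (Fin n), σ i = j ∧ ∀ k, 0 < B k (σ k)

/-- `M` is doubly stochastic: nonnegative with unit row and column sums. -/
def IsDoublyStochastic {n : ℕ} (M : Matrix (Fin n) (Fin n) ℝ) : Prop :=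
  (∀ i j, 0 ≤ M i j) ∧ (∀ i, ∑ j, M i j = 1) ∧ (∀ j, ∑ i, M i j = 1)

private lemma permMatrix_apply' {n : ℕ} (σ : Equiv.Perm (Fin n)) (i j : Fin n) :
    (σ.permMatrix ℝ) i j = if σ i = j then 1 else 0 := by
  simp [Equiv.Perm.permMatrix, PEquiv.toMatrix_apply, Equiv.toPEquiv_apply, eq_comm]

/-- A nonnegative square matrix `B` has total support iff there is a doubly
stochastic matrix with the same zero pattern. -/
theorem stmt_6 (n : ℕ) (hn : 0 < n) (B : Matrix (Fin n) (Fin n) ℝ)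
    (hB : ∀ i j, 0 ≤ B i j) :
    HasTotalSupport B ↔
      ∃ D : Matrix (Fin n) (Fin n) ℝ, IsDoublyStochastic D ∧
        ∀ i j, 0 < D i j ↔ 0 < B i j := by
  classical
  constructor
  · rintro ⟨hB0, hts⟩
    set S : Finset (Equiv.Perm (Fin n)) := univ.filter (fun σ => ∀ k, 0 < B k (σ k)) with hS
    have hSne : S.Nonempty := by
      have : ∃ i j, B i j ≠ 0 := by
        by_contra h
        push_neg at h
        exact hB0 (by ext i j; simpa using h i j)
      obtain ⟨i, j, hij⟩ := this
      obtain ⟨σ, -, hσ⟩ := hts i j hij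
      exact ⟨σ, by simp [hS, hσ]⟩
    have hc : (0 : ℝ) < (S.card : ℝ) := by
      exact_mod_cast Nat.pos_of_ne_zero (fun h => by simp [Finset.card_eq_zero.mp h] at hSne)
    refine ⟨fun i j => ((S.card : ℝ))⁻¹ * ∑ σ ∈ S, if σ i = j then (1:ℝ) else 0,
      ⟨?_, ?_, ?_⟩, ?_⟩
    · intro i j
      positivity
    · intro i
      rw [← Finset.mul_sum, Finset.sum_comm]
      have : ∀ σ ∈ S, (∑ j, if σ i = j then (1:ℝ) else 0) = 1 := by
        intro σ _
        simp
      rw [Finset.sum_congr rfl this]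
      field_simp
      simp
    · intro j
      rw [← Finset.mul_sum, Finset.sum_comm]
      have : ∀ σ ∈ S, (∑ i, if σ i = j then (1:ℝ) else 0) = 1 := by
        intro σ _
        have : ∀ i : Fin n, σ i = j ↔ i = σ⁻¹ j := by
          intro i
          constructor
          · rintro rfl; simp
          · rintro rfl; simp
        simp only [this]
        simp
      rw [Finset.sum_congr rfl this]
      field_simp
      simp
    · intro i j
      constructor
      · intro h
        have h' : (0:ℝ) < ((S.card : ℝ))⁻¹ * ∑ σ ∈ S, if σ i = j then (1:ℝ) else 0 := h
        have hsum : (∑ σ ∈ S, if σ i = j then (1:ℝ) else 0) ≠ 0 := by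
          intro h0
          rw [h0, mul_zero] at h'
          exact lt_irrefl 0 h'
        obtain ⟨σ, hσS, hσpos⟩ := Finset.exists_ne_zero_of_sum_ne_zero hsum
        have hσij : σ i = j := by
          by_contra hne
          simp [hne] at hσpos
        have := (Finset.mem_filter.mp hσS).2 i
        rwa [hσij] at this
      · intro h
        obtain ⟨σ, hσij, hσ⟩ := hts i j h.ne'
        have hσS : σ ∈ S := by simp [hS, hσ]
        have : (0:ℝ) < ∑ σ ∈ S, if σ i = j then (1:ℝ) else 0 :=
          Finset.sum_pos' (fun τ _ => by positivity)
            ⟨σ, hσS, by simp [hσij]⟩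
        positivity
  · rintro ⟨D, ⟨hDnn, hDr, hDc⟩, hpat⟩
    have hDmem : D ∈ doublyStochastic ℝ (Fin n) :=
      mem_doublyStochastic_iff_sum.mpr ⟨hDnn, hDr, hDc⟩
    obtain ⟨w, hw0, hw1, hwD⟩ := exists_eq_sum_perm_of_mem_doublyStochastic hDmem
    have hDentry : ∀ i j, D i j = ∑ σ : Equiv.Perm (Fin n),
        w σ * (if σ i = j then (1:ℝ) else 0) := by
      intro i j
      rw [← hwD]
      simp [Matrix.sum_apply, permMatrix_apply', mul_ite, mul_one, mul_zero,
        Equiv.toPEquiv_apply]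
    constructor
    · intro h0
      have i0 : Fin n := ⟨0, hn⟩
      have : ∃ j, 0 < D i0 j := by
        by_contra h
        push_neg at h
        have : ∑ j, D i0 j = 0 :=
          Finset.sum_eq_zero fun j _ => le_antisymm (h j) (hDnn i0 j)
        rw [hDr i0] at this
        norm_num at this
      obtain ⟨j, hj⟩ := this
      have := (hpat i0 j).mp hj
      rw [h0] at this
      simp at this
    · intro i j hij
      have hDij : 0 < D i j := (hpat i j).mpr (lt_of_le_of_ne (hB i j) (Ne.symm hij))
      have : ∃ σ, 0 < w σ ∧ σ i = j := by
        by_contra h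
        push_neg at h
        have : D i j = 0 := by
          rw [hDentry i j]
          refine Finset.sum_eq_zero fun σ _ => ?_
          rcases eq_or_lt_of_le (hw0 σ) with hw | hw
          · simp [← hw]
          · simp [h σ hw]
        rw [this] at hDij
        exact lt_irrefl 0 hDij
      obtain ⟨σ, hwσ, hσij⟩ := this
      refine ⟨σ, hσij, fun k => ?_⟩
      have hDk : 0 < D k (σ k) := by
        rw [hDentry k (σ k)]
        refine Finset.sum_pos' (fun τ _ => by have := hw0 τ; positivity) ⟨σ, Finset.mem_univ σ, ?_⟩
        simp [hwσ]
      exact (hpat k (σ k)).mp hDk
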